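/- Let a and b be coprime positive integers and k ≥ 1. Then for every integer j ≥ ab, j ∈ S_k(a,b) if and only if j - ab ∈ S_{k-1}(a,b); that is, j has more than k representations in the form ma + nb (m, n ∈ ℕ) if and only if j - ab has more than k - 1 such representations. -/

import Mathlib

/-- `repCount a b j` is the number of representations of `j` in the form
`m * a + n * b` with `m, n : ℕ`. -/
noncomputable def repCount (a b j : ℕ) : ℕ :=
  Nat.card {p : ℕ × ℕ // p.1 * a + p.2 * b = j}

lemma repFinite (a b t : ℕ) (ha : 0 < a) (hb : 0 < b) :
    Finite {p : ℕ × ℕ // p.1 * a + p.2 * b = t} := by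
  have : {p : ℕ × ℕ | p.1 * a + p.2 * b = t} ⊆ Set.Iic t ×ˢ Set.Iic t := by
    rintro ⟨m, n⟩ h
    simp only [Set.mem_setOf_eq] at h
    have h1 : m ≤ m * a := Nat.le_mul_of_pos_right m ha
    have h2 : n ≤ n * b := Nat.le_mul_of_pos_right n hb
    exact ⟨by simp only [Set.mem_Iic]; omega, by simp only [Set.mem_Iic]; omega⟩
  exact (Set.Finite.subset ((Set.finite_Iic t).prod (Set.finite_Iic t)) this).to_subtype

lemma repCount_step (a b : ℕ) (ha : 0 < a) (hb : 0 < b) (hab : Nat.Coprime a b)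
    (j : ℕ) (hj : a * b ≤ j) :
    repCount a b j = repCount a b (j - a * b) + 1 := by
  haveI : NeZero b := ⟨hb.ne'⟩
  haveI := repFinite a b j ha hb
  haveI := repFinite a b (j - a * b) ha hb
  have hu : IsUnit (a : ZMod b) := (ZMod.isUnit_iff_coprime a b).mpr hab
  set m0 : ℕ := (((j : ZMod b)) * (↑a : ZMod b)⁻¹).val with hm0
  have hm0lt : m0 < b := ZMod.val_lt _
  have hcast : ((m0 : ZMod b)) * a = (j : ZMod b) := by
    rw [hm0, ZMod.natCast_val, ZMod.cast_id, mul_assoc, ZMod.inv_mul_of_unit _ hu, mul_one]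
  have hle : m0 * a ≤ j := by nlinarith
  have hmod : m0 * a ≡ j [MOD b] := by
    apply (ZMod.natCast_eq_natCast_iff (m0 * a) j b).mp
    push_cast
    exact hcast
  obtain ⟨n0, hn0⟩ := (Nat.modEq_iff_dvd' hle).mp hmod
  have hrep0 : m0 * a + n0 * b = j := by
    rw [mul_comm n0 b, ← hn0]; omega
  have huniq : ∀ m n : ℕ, m < b → m * a + n * b = j → m = m0 ∧ n = n0 := by
    intro m n hm hrep
    have hc : ((m : ZMod b)) * a = (j : ZMod b) := by
      have : ((m * a + n * b : ℕ) : ZMod b) = (j : ZMod b) := by rw [hrep]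
      push_cast at this
      simpa using this
    have hcc : ((m : ZMod b)) = ((m0 : ZMod b)) := hu.mul_right_cancel (hc.trans hcast.symm)
    have hmm : m = m0 := by
      have := congrArg ZMod.val hcc
      rwa [ZMod.val_cast_of_lt hm, ZMod.val_cast_of_lt hm0lt] at this
    subst hmm
    refine ⟨rfl, Nat.eq_of_mul_eq_mul_right hb (by omega)⟩
  have key : Nat.card {p : ℕ × ℕ // p.1 * a + p.2 * b = j}
      = Nat.card (Option {p : ℕ × ℕ // p.1 * a + p.2 * b = j - a * b}) := by
    apply Nat.card_congr
    have hco : b * a = a * b := Nat.mul_comm b a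
    refine ⟨fun p => if h : b ≤ p.1.1 then some ⟨(p.1.1 - b, p.1.2), ?_⟩ else none,
      fun o => o.elim ⟨(m0, n0), hrep0⟩ (fun q => ⟨(q.1.1 + b, q.1.2), ?_⟩), ?_, ?_⟩
    · have hp := p.2
      have hs : (p.1.1 - b) * a = p.1.1 * a - b * a := Nat.sub_mul _ _ _
      have hge : b * a ≤ p.1.1 * a := Nat.mul_le_mul_right a h
      simp only
      omega
    · have hq := q.2
      have hs : (q.1.1 + b) * a = q.1.1 * a + b * a := Nat.add_mul _ _ _
      simp only at hq ⊢
      omega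
    · rintro ⟨⟨m, n⟩, hp⟩
      by_cases h : b ≤ m
      · simp only [h, dif_pos, Option.elim]
        exact Subtype.ext (by simp only [Prod.mk.injEq]; exact ⟨by omega, trivial⟩)
      · simp only [h, dif_neg, not_false_iff, Option.elim]
        obtain ⟨h1, h2⟩ := huniq m n (by omega) hp
        exact Subtype.ext (by simp [h1, h2])
    · rintro (_ | ⟨⟨⟨m, n⟩, hq⟩⟩)
      · simp only [Option.elim]
        exact dif_neg (show ¬ b ≤ m0 by omega)
      · simp only [Option.elim]
        refine (dif_pos (show b ≤ m + b by omega)).trans ?_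
        exact congrArg some (Subtype.ext (by simp only [Prod.mk.injEq]; exact ⟨by omega, trivial⟩))
  rw [repCount, repCount, key, Finite.card_option]

/-- For `k ≥ 1` and `j ≥ ab`, the integer `j` has more than `k` representations if and
only if `j - ab` has more than `k - 1` representations. -/
theorem mem_Sk_iff (a b k : ℕ) (ha : 0 < a) (hb : 0 < b) (hab : Nat.Coprime a b)
    (hk : 1 ≤ k) :
    ∀ j : ℕ, a * b ≤ j → (k < repCount a b j ↔ k - 1 < repCount a b (j - a * b)) := by
  intro j hj
  rw [repCount_step a b ha hb hab j hj]
  omega
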